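/- Let N ≥ 2 and let M be a real symmetric positive semidefinite N×N matrix with M·1_N = 0, where 1_N is the all-ones vector. Suppose λ₂ > 0 is a constant such that vᵀ M v ≥ λ₂ ‖v‖² for every v ∈ ℝ^N with Σ_i v_i = 0. Then for every vector ζ ∈ ℝ^N with all entries strictly positive and every x ∈ ℝ^N with x ≠ 0 and ζᵀ x = 0, one has xᵀ M x / (xᵀ x) > λ₂ / N. -/

import Mathlib

open Matrix

private lemma aux_sq_sum_lt (N : ℕ) (hN : 2 ≤ N) (x : Fin N → ℝ) (j : Fin N) (hj : x j < 0)
    (hs : 0 ≤ ∑ i, x i) : (∑ i, x i)^2 < ((N : ℝ) - 1) * ∑ i, (x i)^2 := by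
  have hN1 : (2:ℝ) ≤ (N:ℝ) := by exact_mod_cast hN
  have h2 : (∑ i, x i)^2 ≤ (∑ i, x i - x j)^2 := by nlinarith
  have h3 : ∑ i ∈ Finset.univ.erase j, x i = ∑ i, x i - x j :=
    Finset.sum_erase_eq_sub (Finset.mem_univ j)
  have h4 : (∑ i ∈ Finset.univ.erase j, x i)^2
      ≤ (Finset.univ.erase j).card * ∑ i ∈ Finset.univ.erase j, (x i)^2 :=
    sq_sum_le_card_mul_sum_sq
  have hcard : ((Finset.univ.erase j).card : ℝ) = (N : ℝ) - 1 := by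
    rw [Finset.card_erase_of_mem (Finset.mem_univ j), Finset.card_univ, Fintype.card_fin]
    have h1N : 1 ≤ N := le_trans (by norm_num) hN
    push_cast [Nat.cast_sub h1N]
    ring
  have h5 : ∑ i ∈ Finset.univ.erase j, (x i)^2 = (∑ i, (x i)^2) - (x j)^2 :=
    Finset.sum_erase_eq_sub (Finset.mem_univ j)
  have hxj : 0 < (x j)^2 := by nlinarith
  calc (∑ i, x i)^2 ≤ (∑ i ∈ Finset.univ.erase j, x i)^2 := by rw [h3]; exact h2
    _ ≤ ((N:ℝ) - 1) * ((∑ i, (x i)^2) - (x j)^2) := by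
        rw [← hcard, ← h5]; exact_mod_cast h4
    _ < ((N:ℝ) - 1) * ∑ i, (x i)^2 := by nlinarith

/-- If `M` is a real symmetric positive semidefinite `N×N` matrix
(`N ≥ 2`) with `M·1 = 0` and spectral-gap constant `λ₂ > 0` on the sum-zero subspace,
then for every entrywise positive `ζ` and every nonzero `x` with `ζᵀ x = 0` one has
`xᵀ M x / (xᵀ x) > λ₂ / N`. -/
theorem rayleigh_quotient_bound_on_zeta_orthogonal
    (N : ℕ) (hN : 2 ≤ N) (M : Matrix (Fin N) (Fin N) ℝ)
    (hsymm : M.IsSymm)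
    (hpsd : ∀ v : Fin N → ℝ, 0 ≤ v ⬝ᵥ M.mulVec v)
    (hone : M.mulVec (fun _ => 1) = 0)
    (lam₂ : ℝ) (hlam₂ : 0 < lam₂)
    (hgap : ∀ v : Fin N → ℝ, ∑ i, v i = 0 → lam₂ * (v ⬝ᵥ v) ≤ v ⬝ᵥ M.mulVec v)
    (ζ x : Fin N → ℝ) (hζ : ∀ i, 0 < ζ i) (hx : x ≠ 0) (hζx : ζ ⬝ᵥ x = 0) :
    x ⬝ᵥ M.mulVec x / (x ⬝ᵥ x) > lam₂ / N := by
  have hNR : (0:ℝ) < (N:ℝ) := by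
    have : 0 < N := lt_of_lt_of_le (by norm_num) hN
    exact_mod_cast this
  -- x has a positive and a negative entry
  obtain ⟨k, hk⟩ : ∃ k, x k ≠ 0 := by
    by_contra h; push_neg at h; exact hx (funext h)
  have hneg : ∃ j, x j < 0 := by
    by_contra h; push_neg at h
    have hk' : 0 < x k := lt_of_le_of_ne (h k) (Ne.symm hk)
    have : 0 < ζ ⬝ᵥ x := by
      apply Finset.sum_pos' (fun i _ => mul_nonneg (le_of_lt (hζ i)) (h i))
      exact ⟨k, Finset.mem_univ k, mul_pos (hζ k) hk'⟩
    linarith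
  have hpos : ∃ j, 0 < x j := by
    by_contra h; push_neg at h
    have hk' : x k < 0 := lt_of_le_of_ne (h k) hk
    have hp : 0 < ∑ i, ζ i * (-x i) := by
      apply Finset.sum_pos' (fun i _ => mul_nonneg (le_of_lt (hζ i)) (by linarith [h i]))
      exact ⟨k, Finset.mem_univ k, mul_pos (hζ k) (by linarith)⟩
    have hx0 : ζ ⬝ᵥ x = -∑ i, ζ i * (-x i) := by
      simp [dotProduct]
    rw [hx0] at hζx; linarith
  set s := ∑ i, x i with hs
  -- key : s^2 < (N-1) Σ x²
  have hkey : s^2 < ((N:ℝ) - 1) * ∑ i, (x i)^2 := by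
    rcases le_or_gt 0 s with h | h
    · obtain ⟨j, hj⟩ := hneg
      exact aux_sq_sum_lt N hN x j hj h
    · obtain ⟨j, hj⟩ := hpos
      have hsum : ∑ i, (fun i => -x i) i = -s := by simp [hs]
      have := aux_sq_sum_lt N hN (fun i => -x i) j (by simpa using hj)
        (by rw [hsum]; linarith)
      simpa using this
  have hxx : x ⬝ᵥ x = ∑ i, (x i)^2 := by
    simp [dotProduct, sq]
  have hkey' : s^2 < ((N:ℝ) - 1) * (x ⬝ᵥ x) := by rw [hxx]; exact hkey
  have hxxpos : 0 < x ⬝ᵥ x := by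
    rw [hxx]
    apply Finset.sum_pos' (fun i _ => sq_nonneg _)
    refine ⟨k, Finset.mem_univ k, ?_⟩
    positivity
  -- the projected vector
  set c := s / N with hc
  set v : Fin N → ℝ := fun i => x i - c with hv
  have hvsum : ∑ i, v i = 0 := by
    simp only [hv, Finset.sum_sub_distrib, Finset.sum_const, Finset.card_univ,
      Fintype.card_fin, nsmul_eq_mul, hc, ← hs]
    field_simp
    ring
  have honed : (fun _ : Fin N => (1:ℝ)) ⬝ᵥ M.mulVec x = 0 := by
    rw [dotProduct_mulVec, ← Matrix.mulVec_transpose, hsymm.eq, hone]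
    simp
  have hxoned : x ⬝ᵥ M.mulVec (fun _ : Fin N => (1:ℝ)) = 0 := by
    rw [hone]; simp
  have hvMv : v ⬝ᵥ M.mulVec v = x ⬝ᵥ M.mulVec x := by
    have hveq : v = x - c • (fun _ : Fin N => (1:ℝ)) := by
      funext i; simp [hv, mul_comm]
    rw [hveq, Matrix.mulVec_sub, Matrix.mulVec_smul, hone, smul_zero, sub_zero,
      sub_dotProduct, smul_dotProduct, honed, smul_zero, sub_zero]
  have hvv : v ⬝ᵥ v = x ⬝ᵥ x - 2 * c * s + N * c^2 := by
    have hterm : ∀ i, v i * v i = x i * x i - 2 * c * x i + c^2 := by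
      intro i; simp only [hv]; ring
    simp only [dotProduct, hterm, Finset.sum_add_distrib, Finset.sum_sub_distrib,
      ← Finset.mul_sum, Finset.sum_const, Finset.card_univ, Fintype.card_fin,
      nsmul_eq_mul, ← hs]
  have hvv' : v ⬝ᵥ v = x ⬝ᵥ x - s^2 / N := by
    rw [hvv, hc]; field_simp; ring
  have hgapv := hgap v hvsum
  rw [hvMv, hvv'] at hgapv
  -- conclude
  rw [gt_iff_lt, div_lt_div_iff₀ hNR hxxpos]
  have h7 : lam₂ * ((N:ℝ) * (x ⬝ᵥ x) - s^2) ≤ (x ⬝ᵥ M.mulVec x) * N := by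
    have hne : (N:ℝ) ≠ 0 := ne_of_gt hNR
    have heq : (x ⬝ᵥ x - s^2 / N) * N = (N:ℝ) * (x ⬝ᵥ x) - s^2 := by
      field_simp
    calc lam₂ * ((N:ℝ) * (x ⬝ᵥ x) - s^2) = lam₂ * (x ⬝ᵥ x - s^2 / N) * N := by
          rw [← heq]; ring
      _ ≤ (x ⬝ᵥ M.mulVec x) * N := mul_le_mul_of_nonneg_right hgapv hNR.le
  have h8 : lam₂ * (x ⬝ᵥ x) < lam₂ * ((N:ℝ) * (x ⬝ᵥ x) - s^2) := by
    apply mul_lt_mul_of_pos_left _ hlam₂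
    nlinarith
  linarith
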